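/- Let F ⊆ ℝ^d be a bounded set and for θ ∈ (0,1) let dim_A^θ F denote the Assouad spectrum of F. Then for all 0 < θ₁ < θ₂ < 1: (1-θ₁)·dim_A^{θ₁} F ≤ (θ₂-θ₁)·dim_A^{θ₁/θ₂} F + (1-θ₂)·dim_A^{θ₂} F, and (1-θ₂)·dim_A^{θ₂} F ≤ (1-θ₁)·dim_A^{θ₁} F. -/

import Mathlib

/-- The covering number `N_δ(E)`: the least cardinality of a finite set of
centres whose open `δ`-balls cover `E`. -/
noncomputable def coverNumber {X : Type*} [MetricSpace X] (E : Set X) (δ : ℝ) : ℕ :=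
  sInf {n : ℕ | ∃ S : Finset X, S.card = n ∧ E ⊆ ⋃ x ∈ S, Metric.ball x δ}

/-- The Assouad spectrum `dim_A^θ F` of a set `F ⊆ ℝ^d`. -/
noncomputable def assouadSpectrum {d : ℕ} (F : Set (EuclideanSpace ℝ (Fin d)))
    (θ : ℝ) : ℝ :=
  sInf {α : ℝ | 0 ≤ α ∧ ∃ C : ℝ, 0 < C ∧ ∀ δ : ℝ, 0 < δ → δ ≤ 1 →
    ∀ x ∈ F, (coverNumber (F ∩ Metric.ball x δ) (δ ^ ((1 : ℝ) / θ)) : ℝ)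
      ≤ C * (δ / δ ^ ((1 : ℝ) / θ)) ^ α}

open Metric Set Bornology

def coverSet {X : Type*} [MetricSpace X] (E : Set X) (δ : ℝ) : Set ℕ :=
  {n : ℕ | ∃ S : Finset X, S.card = n ∧ E ⊆ ⋃ x ∈ S, Metric.ball x δ}

lemma coverNumber_eq {X : Type*} [MetricSpace X] (E : Set X) (δ : ℝ) :
    coverNumber E δ = sInf (coverSet E δ) := rfl

lemma coverNumber_le_card {X : Type*} [MetricSpace X] {E : Set X} {δ : ℝ} {S : Finset X}
    (h : E ⊆ ⋃ x ∈ S, Metric.ball x δ) : coverNumber E δ ≤ S.card :=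
  Nat.sInf_le ⟨S, rfl, h⟩

lemma exists_optimal_cover {X : Type*} [MetricSpace X] {E : Set X} {δ : ℝ}
    (h : (coverSet E δ).Nonempty) :
    ∃ S : Finset X, S.card = coverNumber E δ ∧ E ⊆ ⋃ x ∈ S, Metric.ball x δ :=
  Nat.sInf_mem h

lemma coverNumber_mono {X : Type*} [MetricSpace X] {E E' : Set X} {δ : ℝ}
    (hEE : E ⊆ E') (hne : (coverSet E' δ).Nonempty) :
    coverNumber E δ ≤ coverNumber E' δ := by
  obtain ⟨S, hcard, hcov⟩ := exists_optimal_cover hne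
  exact hcard ▸ coverNumber_le_card (hEE.trans hcov)

/-- Grid covering of a ball in Euclidean space. -/
lemma grid_cover (d : ℕ) (hd : 1 ≤ d) (x : EuclideanSpace ℝ (Fin d)) (r s : ℝ) (hs : 0 < s) :
    ∃ S : Finset (EuclideanSpace ℝ (Fin d)),
      S.card ≤ (2 * ⌈2 * r * Real.sqrt d / s⌉₊ + 1) ^ d ∧
      Metric.ball x r ⊆ ⋃ c ∈ S, Metric.ball c s := by
  classical
  have hd0 : (0:ℝ) < Real.sqrt d := Real.sqrt_pos.2 (by exact_mod_cast hd)
  set h : ℝ := s / (2 * Real.sqrt d) with hh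
  have hhpos : 0 < h := div_pos hs (by positivity)
  set n : ℕ := ⌈2 * r * Real.sqrt d / s⌉₊ with hn
  set S : Finset (EuclideanSpace ℝ (Fin d)) :=
    (Fintype.piFinset (fun _ : Fin d => Finset.Icc (-(n:ℤ)) (n:ℤ))).image
      (fun k => (WithLp.toLp 2 (fun i => x i + h * k i) : EuclideanSpace ℝ (Fin d))) with hS
  refine ⟨S, ?_, ?_⟩
  · calc S.card ≤ (Fintype.piFinset (fun _ : Fin d => Finset.Icc (-(n:ℤ)) (n:ℤ))).card :=
          Finset.card_image_le
      _ = (2 * n + 1) ^ d := by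
          rw [Fintype.card_piFinset]
          simp only [Int.card_Icc, Finset.prod_const, Finset.card_univ, Fintype.card_fin]
          congr 1
          omega
  · intro y hy
    have hyx : dist y x < r := mem_ball.1 hy
    have hr : 0 < r := lt_of_le_of_lt dist_nonneg hyx
    -- coordinate bound
    have hcoord : ∀ i : Fin d, |y i - x i| < r := by
      intro i
      have h1 : |y i - x i| ≤ dist y x := by
        rw [EuclideanSpace.dist_eq, ← Real.sqrt_sq_eq_abs]
        apply Real.sqrt_le_sqrt
        have h0 : (y i - x i) ^ 2 = dist (y i) (x i) ^ 2 := by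
          rw [Real.dist_eq, sq_abs]
        rw [h0]
        exact Finset.single_le_sum (f := fun j => dist (y j) (x j) ^ 2) (fun j _ => sq_nonneg _) (Finset.mem_univ i)
      linarith
    set k : Fin d → ℤ := fun i => round ((y i - x i) / h) with hk
    have hround : ∀ i : Fin d, |(y i - x i) / h - (k i : ℝ)| ≤ 1/2 := fun i => abs_sub_round _
    have hrh : r / h = 2 * r * Real.sqrt d / s := by
      rw [hh]
      field_simp
    have hrn : r / h ≤ (n : ℝ) := by rw [hrh]; exact Nat.le_ceil _
    have hkmem : ∀ i, k i ∈ Finset.Icc (-(n:ℤ)) (n:ℤ) := by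
      intro i
      have h2 : |(y i - x i)/h| < r / h := by
        rw [abs_div, abs_of_pos hhpos]
        exact div_lt_div_of_pos_right (hcoord i) hhpos
      have habs : |((k i : ℝ))| < (n : ℝ) + 1 := by
        have := hround i
        have h3 : |(k i : ℝ)| ≤ |(y i - x i)/h| + 1/2 := by
          have := abs_sub_abs_le_abs_sub ((k i : ℝ)) ((y i - x i)/h)
          rw [abs_sub_comm] at this
          linarith
        linarith
      have habs' : |k i| < (n : ℤ) + 1 := by
        have : ((|k i| : ℤ) : ℝ) < ((n : ℤ) + 1 : ℤ) := by push_cast; rw [← Int.cast_abs] at habs ⊢; exact_mod_cast habs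
        exact_mod_cast this
      rw [Finset.mem_Icc]
      rw [abs_lt] at habs'; omega
    refine mem_iUnion₂.2 ⟨(WithLp.toLp 2 (fun i => x i + h * (k i : ℝ)) : EuclideanSpace ℝ (Fin d)), ?_, ?_⟩
    · rw [hS]
      exact Finset.mem_image.2 ⟨k, Fintype.mem_piFinset.2 hkmem, rfl⟩
    · rw [mem_ball, EuclideanSpace.dist_eq]
      have hdistco : ∀ i : Fin d, dist (y i) (x i + h * (k i : ℝ)) ≤ h / 2 := by
        intro i
        have he : y i - (x i + h * (k i : ℝ)) = h * ((y i - x i)/h - (k i : ℝ)) := by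
          field_simp
          ring
        rw [Real.dist_eq, he, abs_mul, abs_of_pos hhpos]
        calc h * |(y i - x i)/h - (k i : ℝ)| ≤ h * (1/2) := by
              exact mul_le_mul_of_nonneg_left (hround i) hhpos.le
          _ = h / 2 := by ring
      have key : ∑ i : Fin d, dist (y i) ((WithLp.toLp 2 (fun i => x i + h * (k i : ℝ)) :
          EuclideanSpace ℝ (Fin d)) i) ^ 2 ≤ (d : ℝ) * (h/2)^2 := by
        calc ∑ i : Fin d, dist (y i) ((WithLp.toLp 2 (fun i => x i + h * (k i : ℝ)) :
              EuclideanSpace ℝ (Fin d)) i) ^ 2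
            ≤ ∑ _i : Fin d, (h/2)^2 := by
              refine Finset.sum_le_sum (fun i _ => ?_)
              exact pow_le_pow_left₀ dist_nonneg (hdistco i) 2
          _ = (d : ℝ) * (h/2)^2 := by
              rw [Finset.sum_const, Finset.card_univ, Fintype.card_fin, nsmul_eq_mul]
      calc Real.sqrt (∑ i : Fin d, dist (y i) ((WithLp.toLp 2 (fun i => x i + h * (k i : ℝ)) :
              EuclideanSpace ℝ (Fin d)) i) ^ 2)
          ≤ Real.sqrt ((d : ℝ) * (h/2)^2) := Real.sqrt_le_sqrt key
        _ = Real.sqrt d * (h/2) := by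
            rw [Real.sqrt_mul (by positivity), Real.sqrt_sq (by positivity)]
        _ = s / 4 := by rw [hh]; field_simp; ring
        _ < s := by linarith

/-- Quantitative bound: a ball of radius `r` is covered by `≲ (r/s)^d` balls of radius `s`. -/
lemma coverNumber_ball_le (d : ℕ) (hd : 1 ≤ d) (x : EuclideanSpace ℝ (Fin d)) {r s : ℝ}
    (hs : 0 < s) (hsr : s ≤ r) :
    (coverNumber (Metric.ball x r) s : ℝ) ≤ (4 * Real.sqrt d + 3) ^ d * (r / s) ^ d := by
  obtain ⟨S, hcard, hcov⟩ := grid_cover d hd x r s hs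
  have h1 : coverNumber (Metric.ball x r) s ≤ (2 * ⌈2 * r * Real.sqrt d / s⌉₊ + 1) ^ d :=
    le_trans (coverNumber_le_card hcov) hcard
  have hr : 0 < r := lt_of_lt_of_le hs hsr
  have hd0 : (0:ℝ) ≤ Real.sqrt d := Real.sqrt_nonneg _
  have hrs : 1 ≤ r / s := (one_le_div hs).2 hsr
  have h2 : ((2 * ⌈2 * r * Real.sqrt d / s⌉₊ + 1 : ℕ) : ℝ)
      ≤ (4 * Real.sqrt d + 3) * (r / s) := by
    have hceil : (⌈2 * r * Real.sqrt d / s⌉₊ : ℝ) < 2 * r * Real.sqrt d / s + 1 :=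
      Nat.ceil_lt_add_one (by positivity)
    have hq : 2 * r * Real.sqrt d / s = 2 * Real.sqrt d * (r / s) := by ring
    push_cast
    rw [hq] at hceil ⊢
    nlinarith [hceil, hrs, hd0]
  calc (coverNumber (Metric.ball x r) s : ℝ)
      ≤ (((2 * ⌈2 * r * Real.sqrt d / s⌉₊ + 1) ^ d : ℕ) : ℝ) := by exact_mod_cast h1
    _ = (((2 * ⌈2 * r * Real.sqrt d / s⌉₊ + 1 : ℕ) : ℝ)) ^ d := by push_cast; ring
    _ ≤ ((4 * Real.sqrt d + 3) * (r / s)) ^ d := by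
        exact pow_le_pow_left₀ (by positivity) h2 d
    _ = (4 * Real.sqrt d + 3) ^ d * (r / s) ^ d := mul_pow _ _ _

lemma coverSet_nonempty {d : ℕ} (hd : 1 ≤ d) {E : Set (EuclideanSpace ℝ (Fin d))}
    (hE : Bornology.IsBounded E) {s : ℝ} (hs : 0 < s) : (coverSet E s).Nonempty := by
  obtain ⟨r, hr⟩ := hE.subset_ball 0
  obtain ⟨S, _, hcov⟩ := grid_cover d hd 0 r s hs
  exact ⟨S.card, S, rfl, hr.trans hcov⟩

/-- Covering at small scale via an intermediate scale: generic version with arbitrary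
bound for balls. -/
lemma coverNumber_trans {X : Type*} [MetricSpace X] {E : Set X} {ρ s : ℝ} (K : ℕ)
    (hne : (coverSet E ρ).Nonempty)
    (hK : ∀ z : X, (coverSet (Metric.ball z ρ) s).Nonempty ∧
      coverNumber (Metric.ball z ρ) s ≤ K) :
    coverNumber E s ≤ coverNumber E ρ * K := by
  classical
  obtain ⟨S, hScard, hScov⟩ := exists_optimal_cover hne
  choose T hTcard hTcov using fun z => exists_optimal_cover (hK z).1
  refine le_trans (coverNumber_le_card (S := S.biUnion T) ?_) ?_
  · intro e he
    obtain ⟨c, hc, hec⟩ := Set.mem_iUnion₂.1 (hScov he)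
    obtain ⟨z, hz, hez⟩ := Set.mem_iUnion₂.1 (hTcov c hec)
    exact Set.mem_iUnion₂.2 ⟨z, Finset.mem_biUnion.2 ⟨c, hc, hz⟩, hez⟩
  · calc (S.biUnion T).card ≤ ∑ c ∈ S, (T c).card := Finset.card_biUnion_le
      _ ≤ ∑ _c ∈ S, K := Finset.sum_le_sum (fun c _ => (hTcard c) ▸ (hK c).2)
      _ = S.card * K := by rw [Finset.sum_const, smul_eq_mul]
      _ = coverNumber E ρ * K := by rw [hScard]

/-- Covering at small scale via an intermediate scale, with centres relocated into `F`. -/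
lemma coverNumber_chain {X : Type*} [MetricSpace X] (F : Set X) (x : X) {δ ρ s : ℝ} (M : ℕ)
    (hne : (coverSet (F ∩ Metric.ball x δ) ρ).Nonempty)
    (hM : ∀ y ∈ F, (coverSet (F ∩ Metric.ball y (2*ρ)) s).Nonempty ∧
      coverNumber (F ∩ Metric.ball y (2*ρ)) s ≤ M) :
    coverNumber (F ∩ Metric.ball x δ) s ≤ coverNumber (F ∩ Metric.ball x δ) ρ * M := by
  classical
  set E := F ∩ Metric.ball x δ with hE
  obtain ⟨S, hScard, hScov⟩ := exists_optimal_cover hne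
  have hpick : ∀ c : X, ∃ T : Finset X, T.card ≤ M ∧
      E ∩ Metric.ball c ρ ⊆ ⋃ z ∈ T, Metric.ball z s := by
    intro c
    by_cases hcne : (E ∩ Metric.ball c ρ).Nonempty
    · obtain ⟨y, hyE, hyc⟩ := hcne
      obtain ⟨T, hTcard, hTcov⟩ := exists_optimal_cover (hM y hyE.1).1
      refine ⟨T, hTcard ▸ (hM y hyE.1).2, ?_⟩
      intro e ⟨heE, hec⟩
      refine hTcov ⟨heE.1, ?_⟩
      rw [Metric.mem_ball] at *
      calc dist e y ≤ dist e c + dist c y := dist_triangle _ _ _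
        _ < ρ + ρ := add_lt_add hec (by rw [dist_comm]; exact hyc)
        _ = 2 * ρ := by ring
    · exact ⟨∅, Nat.zero_le _, by rw [Set.not_nonempty_iff_eq_empty.1 hcne]; simp⟩
  choose T hTcard hTcov using hpick
  refine le_trans (coverNumber_le_card (S := S.biUnion T) ?_) ?_
  · intro e he
    obtain ⟨c, hc, hec⟩ := Set.mem_iUnion₂.1 (hScov he)
    obtain ⟨z, hz, hez⟩ := Set.mem_iUnion₂.1 (hTcov c ⟨he, hec⟩)
    exact Set.mem_iUnion₂.2 ⟨z, Finset.mem_biUnion.2 ⟨c, hc, hz⟩, hez⟩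
  · calc (S.biUnion T).card ≤ ∑ c ∈ S, (T c).card := Finset.card_biUnion_le
      _ ≤ ∑ _c ∈ S, M := Finset.sum_le_sum (fun c _ => hTcard c)
      _ = S.card * M := by rw [Finset.sum_const, smul_eq_mul]
      _ = coverNumber E ρ * M := by rw [hScard]

lemma ratio_rpow {δ a : ℝ} (hδ : 0 < δ) (α : ℝ) :
    (δ / δ ^ a) ^ α = δ ^ ((1 - a) * α) := by
  rw [Real.rpow_mul hδ.le]
  congr 1
  rw [Real.rpow_sub hδ, Real.rpow_one]

/-- The Assouad spectrum of `F ⊆ ℝ^d`: copy of the defining set. -/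
def specSet {d : ℕ} (F : Set (EuclideanSpace ℝ (Fin d))) (θ : ℝ) : Set ℝ :=
  {α : ℝ | 0 ≤ α ∧ ∃ C : ℝ, 0 < C ∧ ∀ δ : ℝ, 0 < δ → δ ≤ 1 →
    ∀ x ∈ F, (coverNumber (F ∩ Metric.ball x δ) (δ ^ ((1 : ℝ) / θ)) : ℝ)
      ≤ C * (δ / δ ^ ((1 : ℝ) / θ)) ^ α}

lemma bddBelow_specSet {d : ℕ} (F : Set (EuclideanSpace ℝ (Fin d))) (θ : ℝ) :
    BddBelow (specSet F θ) := ⟨0, fun _ hx => hx.1⟩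

/-- The dimension `d` always belongs to the defining set. -/
lemma natdim_mem_specSet {d : ℕ} (hd : 1 ≤ d) {F : Set (EuclideanSpace ℝ (Fin d))}
    (hF : IsBounded F) {θ : ℝ} (hθ0 : 0 < θ) (hθ1 : θ ≤ 1) :
    ((d : ℝ)) ∈ specSet F θ := by
  refine ⟨Nat.cast_nonneg d, (4 * Real.sqrt d + 3) ^ d, by positivity, ?_⟩
  intro δ hδ hδ1 x hx
  have hs : 0 < δ ^ ((1:ℝ)/θ) := Real.rpow_pos_of_pos hδ _
  have hinv : (1:ℝ) ≤ 1/θ := by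
    rw [le_div_iff₀ hθ0]; linarith
  have hsr : δ ^ ((1:ℝ)/θ) ≤ δ := by
    nth_rewrite 2 [← Real.rpow_one δ]
    exact Real.rpow_le_rpow_of_exponent_ge hδ hδ1 hinv
  have h1 : coverNumber (F ∩ Metric.ball x δ) (δ ^ ((1:ℝ)/θ))
      ≤ coverNumber (Metric.ball x δ) (δ ^ ((1:ℝ)/θ)) :=
    coverNumber_mono Set.inter_subset_right (coverSet_nonempty hd Metric.isBounded_ball hs)
  calc (coverNumber (F ∩ Metric.ball x δ) (δ ^ ((1:ℝ)/θ)) : ℝ)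
      ≤ (coverNumber (Metric.ball x δ) (δ ^ ((1:ℝ)/θ)) : ℝ) := by exact_mod_cast h1
    _ ≤ (4 * Real.sqrt d + 3) ^ d * (δ / δ ^ ((1:ℝ)/θ)) ^ d :=
        coverNumber_ball_le d hd x hs hsr
    _ = (4 * Real.sqrt d + 3) ^ d * (δ / δ ^ ((1:ℝ)/θ)) ^ ((d:ℕ):ℝ) := by
        rw [Real.rpow_natCast]

lemma specSet_nonempty {d : ℕ} (hd : 1 ≤ d) {F : Set (EuclideanSpace ℝ (Fin d))}
    (hF : IsBounded F) {θ : ℝ} (hθ0 : 0 < θ) (hθ1 : θ ≤ 1) :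
    (specSet F θ).Nonempty := ⟨(d : ℝ), natdim_mem_specSet hd hF hθ0 hθ1⟩

/-- Monotonicity step: membership transfers from `θ₁` to `θ₂`. -/
lemma mem_specSet_of_lt {d : ℕ} (hd : 1 ≤ d) {F : Set (EuclideanSpace ℝ (Fin d))}
    {θ₁ θ₂ α : ℝ} (h0 : 0 < θ₁) (h12 : θ₁ < θ₂) (h1 : θ₂ < 1)
    (hα : α ∈ specSet F θ₁) : α * (1 - θ₁) / (1 - θ₂) ∈ specSet F θ₂ := by
  obtain ⟨hα0, C, hC, hB⟩ := hα
  have hθ₂0 : 0 < θ₂ := h0.trans h12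
  have h1θ₂ : (0:ℝ) < 1 - θ₂ := by linarith
  have h1θ₁ : (0:ℝ) < 1 - θ₁ := by linarith
  have hθ₁ne : θ₁ ≠ 0 := ne_of_gt h0
  have hθ₂ne : θ₂ ≠ 0 := ne_of_gt hθ₂0
  have h1θ₂ne : (1:ℝ) - θ₂ ≠ 0 := ne_of_gt h1θ₂
  refine ⟨by positivity, C, hC, ?_⟩
  intro δ hδ hδ1 x hx
  set δ' := δ ^ (θ₁/θ₂) with hδ'
  have hδ'pos : 0 < δ' := Real.rpow_pos_of_pos hδ _
  have hδ'1 : δ' ≤ 1 := Real.rpow_le_one hδ.le hδ1 (by positivity)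
  have hradius : δ' ^ ((1:ℝ)/θ₁) = δ ^ ((1:ℝ)/θ₂) := by
    rw [hδ', ← Real.rpow_mul hδ.le]
    congr 1
    field_simp
  have hsub : F ∩ Metric.ball x δ ⊆ F ∩ Metric.ball x δ' := by
    apply Set.inter_subset_inter_right
    apply Metric.ball_subset_ball
    nth_rewrite 1 [← Real.rpow_one δ]
    exact Real.rpow_le_rpow_of_exponent_ge hδ hδ1 ((div_le_one hθ₂0).2 h12.le)
  have hbdd : IsBounded (F ∩ Metric.ball x δ') :=
    Metric.isBounded_ball.subset Set.inter_subset_right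
  have hmono : coverNumber (F ∩ Metric.ball x δ) (δ ^ ((1:ℝ)/θ₂))
      ≤ coverNumber (F ∩ Metric.ball x δ') (δ ^ ((1:ℝ)/θ₂)) :=
    coverNumber_mono hsub (coverSet_nonempty hd hbdd (Real.rpow_pos_of_pos hδ _))
  calc (coverNumber (F ∩ Metric.ball x δ) (δ ^ ((1:ℝ)/θ₂)) : ℝ)
      ≤ (coverNumber (F ∩ Metric.ball x δ') (δ ^ ((1:ℝ)/θ₂)) : ℝ) := by exact_mod_cast hmono
    _ = (coverNumber (F ∩ Metric.ball x δ') (δ' ^ ((1:ℝ)/θ₁)) : ℝ) := by rw [hradius]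
    _ ≤ C * (δ' / δ' ^ ((1:ℝ)/θ₁)) ^ α := hB δ' hδ'pos hδ'1 x hx
    _ = C * (δ / δ ^ ((1:ℝ)/θ₂)) ^ (α * (1 - θ₁) / (1 - θ₂)) := by
        rw [ratio_rpow hδ'pos, ratio_rpow hδ, hδ', ← Real.rpow_mul hδ.le]
        congr 2
        field_simp
        ring

/-- The key composition lemma: exponents combine across scales. -/
lemma mem_specSet_comb {d : ℕ} (hd : 1 ≤ d) {F : Set (EuclideanSpace ℝ (Fin d))}
    (hF : IsBounded F) {θ₁ θ₂ α β : ℝ} (h0 : 0 < θ₁) (h12 : θ₁ < θ₂) (h1 : θ₂ < 1)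
    (hα : α ∈ specSet F (θ₁/θ₂)) (hβ : β ∈ specSet F θ₂) :
    ((θ₂ - θ₁) * α + (1 - θ₂) * β) / (1 - θ₁) ∈ specSet F θ₁ := by
  obtain ⟨hα0, C, hC, hA⟩ := hα
  obtain ⟨hβ0, C', hC', hB⟩ := hβ
  have hθ₂0 : 0 < θ₂ := h0.trans h12
  have h1θ₂ : (0:ℝ) < 1 - θ₂ := by linarith
  have h1θ₁ : (0:ℝ) < 1 - θ₁ := by linarith
  have hθ₁ne : θ₁ ≠ 0 := ne_of_gt h0
  have hθ₂ne : θ₂ ≠ 0 := ne_of_gt hθ₂0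
  have h1θ₁ne : (1:ℝ) - θ₁ ≠ 0 := ne_of_gt h1θ₁
  set γ : ℝ := ((θ₂ - θ₁) * α + (1 - θ₂) * β) / (1 - θ₁) with hγ
  have hγ0 : 0 ≤ γ := by
    apply div_nonneg _ h1θ₁.le
    have : 0 ≤ (θ₂ - θ₁) * α := mul_nonneg (by linarith) hα0
    have : 0 ≤ (1 - θ₂) * β := mul_nonneg (by linarith) hβ0
    linarith
  -- constants
  set Cd : ℝ := (4 * Real.sqrt d + 3) ^ d with hCd
  have hCdpos : 0 < Cd := by positivity
  set KK : ℝ := Cd * ((2:ℝ) ^ ((1:ℝ)/θ₂)) ^ d with hKK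
  have hKKpos : 0 < KK := by positivity
  set e : ℝ := (1 - 1/θ₂) * β with he
  set δ₀ : ℝ := (1/2 : ℝ) ^ (θ₁/θ₂) with hδ₀
  have hδ₀pos : 0 < δ₀ := Real.rpow_pos_of_pos (by norm_num) _
  set K₀ : ℝ := Cd * (δ₀ ^ ((1:ℝ) - 1/θ₁)) ^ d with hK₀
  have hK₀pos : 0 < K₀ := by positivity
  set C₂ : ℝ := C * C' * ((2:ℝ) ^ e) * KK with hC₂
  have hC₂pos : 0 < C₂ := by positivity
  refine ⟨hγ0, K₀ + C₂, by positivity, ?_⟩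
  intro δ hδ hδ1 x hx
  have hinv₁ : (1:ℝ) ≤ 1/θ₁ := by rw [le_div_iff₀ h0]; linarith
  have hRδ : δ / δ ^ ((1:ℝ)/θ₁) = δ ^ ((1:ℝ) - 1/θ₁) := by
    rw [Real.rpow_sub hδ, Real.rpow_one]
  have hR1 : 1 ≤ δ / δ ^ ((1:ℝ)/θ₁) := by
    rw [hRδ]
    exact Real.one_le_rpow_of_pos_of_le_one_of_nonpos hδ hδ1 (by linarith)
  have hRγ : 1 ≤ (δ / δ ^ ((1:ℝ)/θ₁)) ^ γ := by
    calc (1:ℝ) = (1:ℝ) ^ γ := (Real.one_rpow _).symm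
      _ ≤ (δ / δ ^ ((1:ℝ)/θ₁)) ^ γ := Real.rpow_le_rpow (by norm_num) hR1 hγ0
  have hspos : 0 < δ ^ ((1:ℝ)/θ₁) := Real.rpow_pos_of_pos hδ _
  by_cases hsmall : δ ≤ δ₀
  · -- small δ: the composition of scales
    set ρ : ℝ := δ ^ ((1:ℝ)/(θ₁/θ₂)) with hρ
    have hfrac : (1:ℝ)/(θ₁/θ₂) = θ₂/θ₁ := one_div_div _ _
    have hρpos : 0 < ρ := Real.rpow_pos_of_pos hδ _
    have hρhalf : ρ ≤ 1/2 := by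
      rw [hρ, hfrac]
      calc δ ^ (θ₂/θ₁) ≤ δ₀ ^ (θ₂/θ₁) :=
            Real.rpow_le_rpow hδ.le hsmall (by positivity)
        _ = (1/2 : ℝ) := by
            rw [hδ₀, ← Real.rpow_mul (by norm_num)]
            rw [show θ₁/θ₂ * (θ₂/θ₁) = 1 by field_simp, Real.rpow_one]
    have h2ρpos : (0:ℝ) < 2 * ρ := by linarith
    have h2ρ1 : 2 * ρ ≤ 1 := by linarith
    -- the intermediate radius
    have hρδ : ρ = δ ^ (θ₂/θ₁) := by rw [hρ, hfrac]
    have hs'eq : (2*ρ) ^ ((1:ℝ)/θ₂) = (2:ℝ) ^ ((1:ℝ)/θ₂) * δ ^ ((1:ℝ)/θ₁) := by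
      rw [Real.mul_rpow (by norm_num) hρpos.le, hρδ, ← Real.rpow_mul hδ.le]
      congr 2
      field_simp
    have hone_le : (1:ℝ) ≤ (2:ℝ) ^ ((1:ℝ)/θ₂) :=
      Real.one_le_rpow (by norm_num) (by positivity)
    -- bound for covering balls of radius s' by balls of radius s
    have hKz : ∀ z : EuclideanSpace ℝ (Fin d),
        (coverSet (Metric.ball z ((2*ρ) ^ ((1:ℝ)/θ₂))) (δ ^ ((1:ℝ)/θ₁))).Nonempty ∧
        coverNumber (Metric.ball z ((2*ρ) ^ ((1:ℝ)/θ₂))) (δ ^ ((1:ℝ)/θ₁)) ≤ ⌊KK⌋₊ := by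
      intro z
      refine ⟨coverSet_nonempty hd Metric.isBounded_ball hspos, Nat.le_floor ?_⟩
      have hs'div : (2*ρ) ^ ((1:ℝ)/θ₂) / δ ^ ((1:ℝ)/θ₁) = (2:ℝ) ^ ((1:ℝ)/θ₂) := by
        rw [hs'eq]
        exact mul_div_cancel_right₀ _ (ne_of_gt hspos)
      have hss' : δ ^ ((1:ℝ)/θ₁) ≤ (2*ρ) ^ ((1:ℝ)/θ₂) := by
        rw [hs'eq]
        nth_rewrite 1 [← one_mul (δ ^ ((1:ℝ)/θ₁))]
        exact mul_le_mul_of_nonneg_right hone_le hspos.le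
      calc (coverNumber (Metric.ball z ((2*ρ) ^ ((1:ℝ)/θ₂))) (δ ^ ((1:ℝ)/θ₁)) : ℝ)
          ≤ Cd * ((2*ρ) ^ ((1:ℝ)/θ₂) / δ ^ ((1:ℝ)/θ₁)) ^ d :=
            coverNumber_ball_le d hd z hspos hss'
        _ = KK := by rw [hs'div, hKK]
    -- inner bound for balls centred in F
    set B : ℝ := C' * ((2*ρ) / (2*ρ) ^ ((1:ℝ)/θ₂)) ^ β * KK with hBdef
    have hBpos : 0 < B := by
      have : (0:ℝ) < ((2*ρ) / (2*ρ) ^ ((1:ℝ)/θ₂)) ^ β :=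
        Real.rpow_pos_of_pos (div_pos h2ρpos (Real.rpow_pos_of_pos h2ρpos _)) _
      positivity
    have hMy : ∀ y ∈ F,
        (coverSet (F ∩ Metric.ball y (2*ρ)) (δ ^ ((1:ℝ)/θ₁))).Nonempty ∧
        coverNumber (F ∩ Metric.ball y (2*ρ)) (δ ^ ((1:ℝ)/θ₁)) ≤ ⌊B⌋₊ := by
      intro y hy
      have hbdd : IsBounded (F ∩ Metric.ball y (2*ρ)) :=
        Metric.isBounded_ball.subset Set.inter_subset_right
      refine ⟨coverSet_nonempty hd hbdd hspos, Nat.le_floor ?_⟩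
      have htrans := coverNumber_trans (E := F ∩ Metric.ball y (2*ρ))
        (ρ := (2*ρ) ^ ((1:ℝ)/θ₂)) (s := δ ^ ((1:ℝ)/θ₁)) ⌊KK⌋₊
        (coverSet_nonempty hd hbdd (Real.rpow_pos_of_pos h2ρpos _)) hKz
      have hinner := hB (2*ρ) h2ρpos h2ρ1 y hy
      calc (coverNumber (F ∩ Metric.ball y (2*ρ)) (δ ^ ((1:ℝ)/θ₁)) : ℝ)
          ≤ (coverNumber (F ∩ Metric.ball y (2*ρ)) ((2*ρ) ^ ((1:ℝ)/θ₂)) : ℝ) * ⌊KK⌋₊ := by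
            exact_mod_cast htrans
        _ ≤ (C' * ((2*ρ) / (2*ρ) ^ ((1:ℝ)/θ₂)) ^ β) * KK := by
            apply mul_le_mul hinner (Nat.floor_le hKKpos.le) (Nat.cast_nonneg _)
            positivity
        _ = B := by rw [hBdef]
    -- the chain
    have hEbdd : IsBounded (F ∩ Metric.ball x δ) :=
      Metric.isBounded_ball.subset Set.inter_subset_right
    have hchain := coverNumber_chain F x (δ := δ) (ρ := ρ) ⌊B⌋₊
      (coverSet_nonempty hd hEbdd hρpos) hMy
    have hαbound := hA δ hδ hδ1 x hx
    rw [hρ] at hchain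
    calc (coverNumber (F ∩ Metric.ball x δ) (δ ^ ((1:ℝ)/θ₁)) : ℝ)
        ≤ (coverNumber (F ∩ Metric.ball x δ) (δ ^ ((1:ℝ)/(θ₁/θ₂))) : ℝ) * ⌊B⌋₊ := by
          exact_mod_cast hchain
      _ ≤ (C * (δ / δ ^ ((1:ℝ)/(θ₁/θ₂))) ^ α) * B := by
          apply mul_le_mul hαbound (Nat.floor_le hBpos.le) (Nat.cast_nonneg _)
          have : (0:ℝ) < (δ / δ ^ ((1:ℝ)/(θ₁/θ₂))) ^ α :=
            Real.rpow_pos_of_pos (div_pos hδ hρpos) _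
          positivity
      _ = C₂ * δ ^ (((1:ℝ) - 1/θ₁) * γ) := by
          have h1 : (δ / δ ^ ((1:ℝ)/(θ₁/θ₂))) ^ α = δ ^ ((1 - θ₂/θ₁) * α) := by
            rw [hfrac]; exact ratio_rpow hδ α
          have h2 : ((2*ρ) / (2*ρ) ^ ((1:ℝ)/θ₂)) ^ β
              = (2:ℝ) ^ e * δ ^ ((θ₂/θ₁) * e) := by
            rw [ratio_rpow h2ρpos, ← he, Real.mul_rpow (by norm_num) hρpos.le, hρδ,
              ← Real.rpow_mul hδ.le]
          have h3 : δ ^ ((1 - θ₂/θ₁) * α) * δ ^ ((θ₂/θ₁) * e) = δ ^ (((1:ℝ) - 1/θ₁) * γ) := by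
            rw [← Real.rpow_add hδ]
            congr 1
            rw [he, hγ]
            field_simp
            ring
          rw [hBdef, h1, h2, ← h3, hC₂]
          ring
      _ = C₂ * (δ / δ ^ ((1:ℝ)/θ₁)) ^ γ := by rw [ratio_rpow hδ]
      _ ≤ (K₀ + C₂) * (δ / δ ^ ((1:ℝ)/θ₁)) ^ γ := by
          apply mul_le_mul_of_nonneg_right (by linarith) (by linarith)
  · -- large δ: uniform bound
    push_neg at hsmall
    have hsr : δ ^ ((1:ℝ)/θ₁) ≤ δ := by
      nth_rewrite 2 [← Real.rpow_one δ]
      exact Real.rpow_le_rpow_of_exponent_ge hδ hδ1 hinv₁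
    have h1 : coverNumber (F ∩ Metric.ball x δ) (δ ^ ((1:ℝ)/θ₁))
        ≤ coverNumber (Metric.ball x δ) (δ ^ ((1:ℝ)/θ₁)) :=
      coverNumber_mono Set.inter_subset_right
        (coverSet_nonempty hd Metric.isBounded_ball hspos)
    have h2 : δ / δ ^ ((1:ℝ)/θ₁) ≤ δ₀ ^ ((1:ℝ) - 1/θ₁) := by
      rw [hRδ]
      exact Real.rpow_le_rpow_of_nonpos hδ₀pos hsmall.le (by linarith)
    calc (coverNumber (F ∩ Metric.ball x δ) (δ ^ ((1:ℝ)/θ₁)) : ℝ)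
        ≤ (coverNumber (Metric.ball x δ) (δ ^ ((1:ℝ)/θ₁)) : ℝ) := by exact_mod_cast h1
      _ ≤ Cd * (δ / δ ^ ((1:ℝ)/θ₁)) ^ d := coverNumber_ball_le d hd x hspos hsr
      _ ≤ Cd * (δ₀ ^ ((1:ℝ) - 1/θ₁)) ^ d := by
          apply mul_le_mul_of_nonneg_left _ hCdpos.le
          exact pow_le_pow_left₀ (by positivity) h2 d
      _ = K₀ := by rw [hK₀]
      _ ≤ K₀ * (δ / δ ^ ((1:ℝ)/θ₁)) ^ γ := le_mul_of_one_le_right hK₀pos.le hRγ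
      _ ≤ (K₀ + C₂) * (δ / δ ^ ((1:ℝ)/θ₁)) ^ γ := by
          apply mul_le_mul_of_nonneg_right (by linarith) (by linarith)


/-- for bounded F ⊆ ℝ^d and 0 < θ₁ < θ₂ < 1, the Assouad spectrum
satisfies the two-sided constraint defining the class 𝒜_d. -/
theorem stmt_19 (d : ℕ) (hd : 1 ≤ d) (F : Set (EuclideanSpace ℝ (Fin d)))
    (hF : Bornology.IsBounded F) (θ₁ θ₂ : ℝ)
    (h0 : 0 < θ₁) (h12 : θ₁ < θ₂) (h1 : θ₂ < 1) :
    (1 - θ₁) * assouadSpectrum F θ₁ ≤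
      (θ₂ - θ₁) * assouadSpectrum F (θ₁ / θ₂) + (1 - θ₂) * assouadSpectrum F θ₂ ∧
    (1 - θ₂) * assouadSpectrum F θ₂ ≤ (1 - θ₁) * assouadSpectrum F θ₁ := by
  have hθ₂0 : 0 < θ₂ := h0.trans h12
  have h1θ₂ : (0:ℝ) < 1 - θ₂ := by linarith
  have h1θ₁ : (0:ℝ) < 1 - θ₁ := by linarith
  have hq0 : 0 < θ₁/θ₂ := div_pos h0 hθ₂0
  have hq1 : θ₁/θ₂ ≤ 1 := (div_le_one hθ₂0).2 h12.le
  have hA1 : assouadSpectrum F θ₁ = sInf (specSet F θ₁) := rfl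
  have hA2 : assouadSpectrum F θ₂ = sInf (specSet F θ₂) := rfl
  have hAq : assouadSpectrum F (θ₁/θ₂) = sInf (specSet F (θ₁/θ₂)) := rfl
  constructor
  · -- part (i)
    have key : ∀ α ∈ specSet F (θ₁/θ₂), ∀ β ∈ specSet F θ₂,
        (1-θ₁) * assouadSpectrum F θ₁ ≤ (θ₂-θ₁)*α + (1-θ₂)*β := by
      intro α hα β hβ
      have hmem := mem_specSet_comb hd hF h0 h12 h1 hα hβ
      have hle : assouadSpectrum F θ₁ ≤ ((θ₂-θ₁)*α + (1-θ₂)*β)/(1-θ₁) := by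
        rw [hA1]
        exact csInf_le (bddBelow_specSet F θ₁) hmem
      rw [le_div_iff₀ h1θ₁] at hle
      linarith
    have step1 : ∀ α ∈ specSet F (θ₁/θ₂),
        (1-θ₁) * assouadSpectrum F θ₁ ≤ (θ₂-θ₁)*α + (1-θ₂)*assouadSpectrum F θ₂ := by
      intro α hα
      have hlow : ((1-θ₁) * assouadSpectrum F θ₁ - (θ₂-θ₁)*α)/(1-θ₂)
          ≤ sInf (specSet F θ₂) := by
        refine le_csInf (specSet_nonempty hd hF hθ₂0 h1.le) ?_
        intro β hβ
        rw [div_le_iff₀ h1θ₂]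
        have := key α hα β hβ
        linarith
      rw [← hA2, div_le_iff₀ h1θ₂] at hlow
      linarith
    have hfin : ((1-θ₁) * assouadSpectrum F θ₁ - (1-θ₂)*assouadSpectrum F θ₂)/(θ₂-θ₁)
        ≤ sInf (specSet F (θ₁/θ₂)) := by
      refine le_csInf (specSet_nonempty hd hF hq0 hq1) ?_
      intro α hα
      rw [div_le_iff₀ (by linarith : (0:ℝ) < θ₂ - θ₁)]
      have := step1 α hα
      linarith
    rw [← hAq, div_le_iff₀ (by linarith : (0:ℝ) < θ₂ - θ₁)] at hfin
    linarith
  · -- part (ii)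
    have step : ∀ α ∈ specSet F θ₁, (1-θ₂) * assouadSpectrum F θ₂ ≤ (1-θ₁) * α := by
      intro α hα
      have hm := mem_specSet_of_lt hd h0 h12 h1 hα
      have hle : assouadSpectrum F θ₂ ≤ α * (1-θ₁)/(1-θ₂) := by
        rw [hA2]
        exact csInf_le (bddBelow_specSet F θ₂) hm
      rw [le_div_iff₀ h1θ₂] at hle
      linarith
    have hlow : (1-θ₂) * assouadSpectrum F θ₂ / (1-θ₁) ≤ sInf (specSet F θ₁) := by
      refine le_csInf (specSet_nonempty hd hF h0 (by linarith)) ?_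
      intro α hα
      rw [div_le_iff₀ h1θ₁]
      have := step α hα
      linarith
    rw [← hA1, div_le_iff₀ h1θ₁] at hlow
    linarith
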